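/- arXiv:0910.3012 — 5 statements merged into one kernel-verified Lean document; each statement's English description precedes it below -/
import Mathlib

section
/- For a positive integer n, if ⌈2√n⌉² - 4n is a perfect square, then there exist positive integers u and v with n = u·v and |√u - √v| ≤ 1. -/
theorem stmt_1 (n : ℕ) (hn : 0 < n)
    (h : ∃ t : ℤ, ⌈2 * Real.sqrt n⌉ ^ 2 - 4 * (n : ℤ) = t ^ 2) :
    ∃ u v : ℕ, 0 < u ∧ 0 < v ∧ n = u * v ∧
      |Real.sqrt u - Real.sqrt v| ≤ 1 := by
  obtain ⟨t, ht⟩ := h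
  set m : ℤ := ⌈2 * Real.sqrt n⌉ with hm
  set s : ℤ := (t.natAbs : ℤ) with hs
  have hs0 : 0 ≤ s := by positivity
  have hts : m ^ 2 - 4 * (n : ℤ) = s ^ 2 := by
    rw [ht, hs]; simp [sq_abs]
  -- m ≥ 2
  have hsqrt1 : (1 : ℝ) ≤ Real.sqrt n := by
    rw [show (1:ℝ) = Real.sqrt 1 by simp]
    exact Real.sqrt_le_sqrt (by exact_mod_cast hn)
  have hm2 : (2 : ℤ) ≤ m := by
    have : (2 : ℝ) ≤ 2 * Real.sqrt n := by linarith
    have := Int.le_ceil (2 * Real.sqrt n)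
    have h2 : (2 : ℝ) ≤ (m : ℝ) := by linarith
    exact_mod_cast h2
  -- s < m
  have hsm : s < m := by
    nlinarith [sq_nonneg s, sq_nonneg m, (by exact_mod_cast hn : (1:ℤ) ≤ (n:ℤ))]
  -- parity
  have hpar : Even (m - s) := by
    have h4 : Even (m ^ 2 - s ^ 2) := ⟨2 * n, by linarith⟩
    have : Even m ↔ Even s := by
      simpa [Int.even_sub, Int.even_pow] using h4
    rw [Int.even_sub]; exact this
  obtain ⟨a, ha⟩ := hpar
  have ha2 : m - s = 2 * a := by linarith
  have hb2 : m + s = 2 * (a + s) := by linarith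
  set b : ℤ := a + s with hbdef
  have hab : a * b = n := by nlinarith
  have ha1 : 1 ≤ a := by nlinarith
  have hb1 : 1 ≤ b := by nlinarith
  refine ⟨a.toNat, b.toNat, by omega, by omega, ?_, ?_⟩
  · have : (n : ℤ) = (a.toNat : ℤ) * (b.toNat : ℤ) := by
      rw [Int.toNat_of_nonneg (by omega), Int.toNat_of_nonneg (by omega)]; omega
    exact_mod_cast this
  · have hua : ((a.toNat : ℕ) : ℝ) = (a : ℝ) := by
      rw [← Int.cast_natCast, Int.toNat_of_nonneg (by omega)]
    have hvb : ((b.toNat : ℕ) : ℝ) = (b : ℝ) := by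
      rw [← Int.cast_natCast, Int.toNat_of_nonneg (by omega)]
    rw [hua, hvb]
    have ha0 : (0:ℝ) ≤ (a:ℝ) := by exact_mod_cast (by omega : (0:ℤ) ≤ a)
    have hb0 : (0:ℝ) ≤ (b:ℝ) := by exact_mod_cast (by omega : (0:ℤ) ≤ b)
    have habn : (a:ℝ) * (b:ℝ) = (n:ℝ) := by exact_mod_cast hab
    have hsum : (a:ℝ) + (b:ℝ) = (m:ℝ) := by
      have : a + b = m := by omega
      exact_mod_cast this
    have hceil : (m : ℝ) < 2 * Real.sqrt n + 1 := Int.ceil_lt_add_one _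
    have esq : (Real.sqrt a - Real.sqrt b) ^ 2 = (a:ℝ) + b - 2 * Real.sqrt n := by
      rw [sub_sq, Real.sq_sqrt ha0, Real.sq_sqrt hb0, mul_assoc, ← Real.sqrt_mul ha0, habn]
      ring
    have hsq1 : (Real.sqrt a - Real.sqrt b) ^ 2 ≤ 1 := by
      rw [esq, hsum]; linarith
    exact abs_le.mpr (abs_le_of_sq_le_sq' (by simpa using hsq1) (by norm_num))
end

section
/- For a positive integer n, if there exist positive integers u and v with n = u·v and |√u - √v| ≤ 1, then ⌈2√n⌉² - 4n is a perfect square. -/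
theorem stmt_2 (n : ℕ) (hn : 0 < n)
    (h : ∃ u v : ℕ, 0 < u ∧ 0 < v ∧ n = u * v ∧ |Real.sqrt u - Real.sqrt v| ≤ 1) :
    ∃ t : ℕ, ⌈2 * Real.sqrt n⌉ ^ 2 - 4 * (n : ℤ) = (t : ℤ) ^ 2 := by
  obtain ⟨u, v, hu, hv, hnuv, habs⟩ := h
  have hsu : Real.sqrt u ^ 2 = u := Real.sq_sqrt (by positivity)
  have hsv : Real.sqrt v ^ 2 = v := Real.sq_sqrt (by positivity)
  have hmul : Real.sqrt u * Real.sqrt v = Real.sqrt n := by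
    rw [hnuv, ← Real.sqrt_mul (by positivity)]
    push_cast; ring_nf
  have hsq : (Real.sqrt u - Real.sqrt v) ^ 2 = (u : ℝ) + v - 2 * Real.sqrt n := by
    rw [sub_sq, hsu, hsv, mul_assoc, hmul]; ring
  have habs2 : (Real.sqrt u - Real.sqrt v) ^ 2 ≤ 1 := by
    nlinarith [sq_abs (Real.sqrt u - Real.sqrt v), abs_nonneg (Real.sqrt u - Real.sqrt v)]
  have h1 : (u : ℝ) + v - 1 ≤ 2 * Real.sqrt n := by linarith
  have h2 : 2 * Real.sqrt n ≤ (u : ℝ) + v := by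
    nlinarith [sq_nonneg (Real.sqrt u - Real.sqrt v)]
  have hcle : ⌈2 * Real.sqrt n⌉ ≤ (u : ℤ) + v := Int.ceil_le.mpr (by push_cast; exact h2)
  have hcge : (u : ℤ) + v - 1 ≤ ⌈2 * Real.sqrt n⌉ := by
    have h3 : ((u : ℤ) + v - 1 : ℝ) ≤ (⌈2 * Real.sqrt n⌉ : ℝ) := by
      push_cast
      linarith [Int.le_ceil (2 * Real.sqrt n)]
    exact_mod_cast h3
  rcases (by omega : ⌈2 * Real.sqrt n⌉ = (u : ℤ) + v ∨ ⌈2 * Real.sqrt n⌉ = (u : ℤ) + v - 1)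
      with hc | hc
  · refine ⟨((u : ℤ) - v).natAbs, ?_⟩
    have hna := Int.natAbs_mul_self' ((u : ℤ) - v)
    rw [hc, hnuv]
    push_cast
    rw [sq_abs]; ring
  · refine ⟨0, ?_⟩
    have hle : 2 * Real.sqrt n ≤ ((u : ℝ) + v - 1) := by
      have := Int.le_ceil (2 * Real.sqrt n)
      rw [hc] at this
      push_cast at this
      linarith
    have heq : 2 * Real.sqrt n = (u : ℝ) + v - 1 := le_antisymm hle h1
    have h4n : ((u : ℝ) + v - 1) ^ 2 = 4 * n := by
      rw [← heq]
      have : Real.sqrt n ^ 2 = n := Real.sq_sqrt (by positivity)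
      nlinarith [this]
    have h4nz : ((u : ℤ) + v - 1) ^ 2 = 4 * n := by exact_mod_cast h4n
    rw [hc]
    push_cast
    push_cast at h4nz
    linarith
end

section
/- For a positive integer n, f(f(n)) = 0 if and only if there exist positive integers u, v with n = u·v and |√u - √v| ≤ 1, where f(x) = ⌈2√x⌉² - 4x. -/
noncomputable def f (x : ℤ) : ℤ := ⌈2 * Real.sqrt x⌉ ^ 2 - 4 * x

lemma f_nat (x : ℕ) : f (x:ℤ) = ⌈2 * Real.sqrt x⌉ ^ 2 - 4 * x := by
  unfold f; push_cast; ring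

lemma ceil_sq_ge (x : ℕ) : (4 : ℤ) * x ≤ ⌈2 * Real.sqrt x⌉ ^ 2 := by
  have h1 : (2 : ℝ) * Real.sqrt x ≤ (⌈2 * Real.sqrt (x:ℝ)⌉ : ℝ) := Int.le_ceil _
  have h0 : (0:ℝ) ≤ 2 * Real.sqrt x := by positivity
  have hx : (2 * Real.sqrt (x:ℝ))^2 = 4 * (x:ℝ) := by
    rw [mul_pow, Real.sq_sqrt (by positivity)]; ring
  have h2 : (4:ℝ) * x ≤ (⌈2 * Real.sqrt (x:ℝ)⌉ : ℝ)^2 := by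
    rw [← hx]; exact pow_le_pow_left₀ h0 h1 2
  exact_mod_cast h2

lemma f_nat_nonneg (x : ℕ) : 0 ≤ f (x:ℤ) := by
  rw [f_nat]; linarith [ceil_sq_ge x]

lemma f_sq (k : ℕ) : f ((k:ℤ)^2) = 0 := by
  unfold f
  have h : (((k:ℤ)^2 : ℤ) : ℝ) = ((k:ℝ))^2 := by push_cast; ring
  rw [h, Real.sqrt_sq (by positivity)]
  have h2 : (2:ℝ) * k = ((2*k : ℤ) : ℝ) := by push_cast; ring
  rw [h2, Int.ceil_intCast]
  ring

lemma f_zero_iff (x : ℕ) : f (x:ℤ) = 0 ↔ ∃ k : ℕ, x = k^2 := by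
  constructor
  · intro h
    rw [f_nat] at h
    set c := ⌈2 * Real.sqrt (x:ℝ)⌉ with hc
    have hc0 : (0:ℤ) ≤ c := by
      have h1 : (2 : ℝ) * Real.sqrt x ≤ (c : ℝ) := Int.le_ceil _
      have h0 : (0:ℝ) ≤ 2 * Real.sqrt x := by positivity
      exact_mod_cast le_trans h0 h1
    have hsq : c^2 = 4 * x := by linarith
    have h2 : (2:ℤ) ∣ c := by
      have hd : (2:ℤ) ∣ c^2 := ⟨2*x, by linarith⟩
      exact Int.prime_two.dvd_of_dvd_pow hd
    obtain ⟨m, hm⟩ := h2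
    have hm0 : (0:ℤ) ≤ m := by nlinarith
    have hmx : m^2 = x := by nlinarith
    refine ⟨m.toNat, ?_⟩
    have : ((m.toNat : ℕ) : ℤ) = m := Int.toNat_of_nonneg hm0
    zify; rw [this]; linarith
  · rintro ⟨k, rfl⟩
    have : ((k^2 : ℕ) : ℤ) = (k:ℤ)^2 := by push_cast; ring
    rw [this]; exact f_sq k

lemma f_zero' : f 0 = 0 := by
  have := f_sq 0
  norm_num at this
  exact this

theorem stmt_3 (n : ℕ) (hn : 0 < n) :
    f (f (n : ℤ)) = 0 ↔
      ∃ u v : ℕ, 0 < u ∧ 0 < v ∧ n = u * v ∧ |Real.sqrt u - Real.sqrt v| ≤ 1 := by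
  set c := ⌈2 * Real.sqrt (n:ℝ)⌉ with hcdef
  have hfn : f (n:ℤ) = c^2 - 4*n := f_nat n
  have hclt : (c:ℝ) < 2 * Real.sqrt n + 1 := Int.ceil_lt_add_one _
  have hcge : 2 * Real.sqrt n ≤ (c:ℝ) := Int.le_ceil _
  constructor
  · intro h
    have h0 : 0 ≤ f (n:ℤ) := f_nat_nonneg n
    obtain ⟨j, hj⟩ : ∃ j : ℕ, f (n:ℤ) = (j:ℤ) :=
      ⟨(f (n:ℤ)).toNat, (Int.toNat_of_nonneg h0).symm⟩
    rw [hj] at h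
    obtain ⟨k, hk⟩ := (f_zero_iff j).mp h
    have hfk : c^2 - 4*(n:ℤ) = (k:ℤ)^2 := by
      rw [← hfn, hj, hk]; push_cast; ring
    have hk0 : (0:ℤ) ≤ (k:ℤ) := Int.natCast_nonneg k
    have hc0 : (0:ℤ) ≤ c := by
      have h0' : (0:ℝ) ≤ 2 * Real.sqrt n := by positivity
      exact_mod_cast le_trans h0' hcge
    have hn1 : (1:ℤ) ≤ (n:ℤ) := by exact_mod_cast hn
    have hck : (k:ℤ) < c := by nlinarith
    have hprod : (c - k) * (c + k) = 4 * (n:ℤ) := by linear_combination hfk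
    have h2 : (2:ℤ) ∣ (c - (k:ℤ)) := by
      have hd : (2:ℤ) ∣ (c-k) * (c+k) := ⟨2*n, by linarith⟩
      rcases Int.prime_two.dvd_or_dvd hd with h' | h'
      · exact h'
      · omega
    obtain ⟨u', hu'⟩ := h2
    have hu1 : 1 ≤ u' := by omega
    set v' : ℤ := u' + k with hv'
    have hv1 : 1 ≤ v' := by omega
    have hcuv : c = u' + v' := by omega
    have huvn : u' * v' = (n:ℤ) := by nlinarith
    refine ⟨u'.toNat, v'.toNat, by omega, by omega, ?_, ?_⟩
    · have hU : ((u'.toNat : ℕ) : ℤ) = u' := Int.toNat_of_nonneg (by omega)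
      have hV : ((v'.toNat : ℕ) : ℤ) = v' := Int.toNat_of_nonneg (by omega)
      zify; rw [hU, hV]; linarith
    · have hU : ((u'.toNat : ℕ) : ℝ) = (u' : ℝ) := by exact_mod_cast Int.toNat_of_nonneg (show (0:ℤ) ≤ u' by omega)
      have hV : ((v'.toNat : ℕ) : ℝ) = (v' : ℝ) := by exact_mod_cast Int.toNat_of_nonneg (show (0:ℤ) ≤ v' by omega)
      rw [hU, hV]
      rw [← sq_le_one_iff_abs_le_one (Real.sqrt (u':ℝ) - Real.sqrt (v':ℝ))]
      have hu0 : (0:ℝ) ≤ (u':ℝ) := by exact_mod_cast (by omega : (0:ℤ) ≤ u')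
      have hv0 : (0:ℝ) ≤ (v':ℝ) := by exact_mod_cast (by omega : (0:ℤ) ≤ v')
      have hmul : Real.sqrt u' * Real.sqrt v' = Real.sqrt n := by
        rw [← Real.sqrt_mul hu0]
        congr 1
        exact_mod_cast huvn
      have hsq : (Real.sqrt u' - Real.sqrt v')^2 =
          (u':ℝ) + v' - 2 * Real.sqrt n := by
        have h1 : Real.sqrt (u':ℝ) ^ 2 = (u':ℝ) := Real.sq_sqrt hu0
        have h2 : Real.sqrt (v':ℝ) ^ 2 = (v':ℝ) := Real.sq_sqrt hv0
        rw [sub_sq, h1, h2]; linear_combination (-2:ℝ) * hmul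
      rw [hsq]
      have hcr : ((u':ℝ) + v') = (c:ℝ) := by exact_mod_cast hcuv.symm
      linarith
  · rintro ⟨u, v, hu, hv, huv, habs⟩
    have hu0 : (0:ℝ) ≤ (u:ℝ) := by positivity
    have hv0 : (0:ℝ) ≤ (v:ℝ) := by positivity
    have hmul : Real.sqrt u * Real.sqrt v = Real.sqrt n := by
      rw [← Real.sqrt_mul hu0]
      congr 1
      exact_mod_cast congrArg (Nat.cast : ℕ → ℝ) huv |>.symm
    have hsq : (Real.sqrt (u:ℝ) - Real.sqrt v)^2 = (u:ℝ) + v - 2 * Real.sqrt n := by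
      have h1 : Real.sqrt (u:ℝ) ^ 2 = (u:ℝ) := Real.sq_sqrt hu0
      have h2 : Real.sqrt (v:ℝ) ^ 2 = (v:ℝ) := Real.sq_sqrt hv0
      rw [sub_sq, h1, h2]; linear_combination (-2:ℝ) * hmul
    have hle : (u:ℝ) + v ≤ 2 * Real.sqrt n + 1 := by
      have := (sq_le_one_iff_abs_le_one (Real.sqrt u - Real.sqrt v)).mpr habs
      rw [hsq] at this; linarith
    have hge : 2 * Real.sqrt n ≤ (u:ℝ) + v := by
      have := sq_nonneg (Real.sqrt (u:ℝ) - Real.sqrt v)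
      rw [hsq] at this; linarith
    have hcle : c ≤ (u:ℤ) + v := by
      rw [hcdef]
      apply Int.ceil_le.mpr
      push_cast
      linarith
    have hcge' : (u:ℤ) + v ≤ c + 1 := by
      have : (((u:ℤ) + v : ℤ) : ℝ) ≤ ((c + 1 : ℤ) : ℝ) := by push_cast; linarith
      exact_mod_cast this
    rcases (by omega : (u:ℤ) + v = c ∨ (u:ℤ) + v = c + 1) with hcase | hcase
    · have hfval : f (n:ℤ) = ((u:ℤ) - v)^2 := by
        rw [hfn, ← hcase]
        have : (n:ℤ) = (u:ℤ) * v := by exact_mod_cast huv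
        rw [this]; ring
      have habs2 : f (n:ℤ) = ((((u:ℤ) - v).natAbs : ℕ) : ℤ)^2 := by
        rw [hfval,
          show ((((u:ℤ) - v).natAbs : ℕ) : ℤ) = |(u:ℤ) - v| from (Int.abs_eq_natAbs _).symm,
          sq_abs]
      rw [habs2]
      exact f_sq _
    · have hceq : (c:ℝ) = 2 * Real.sqrt n := by
        have h1 : ((u:ℝ) + v) = (c:ℝ) + 1 := by exact_mod_cast hcase
        linarith
      have hc2 : c^2 = 4 * (n:ℤ) := by
        have : ((c:ℝ))^2 = 4 * (n:ℝ) := by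
          rw [hceq, mul_pow, Real.sq_sqrt (by positivity)]; ring
        exact_mod_cast this
      have : f (n:ℤ) = 0 := by rw [hfn]; linarith
      rw [this]; exact f_zero'
end

section
/- Suppose N = p·q where p and q are primes with |√p - √q| ≤ 1 and p ≠ q. Let t = √(⌈2√N⌉² - 4N). Then t is a positive integer, p and q equal (⌈2√N⌉ + t)/2 and (⌈2√N⌉ - t)/2 (in some order), and these are integers. -/
lemma aux5 (p q N : ℕ) (hp : p.Prime) (hq : q.Prime) (hlt : q < p)
    (hclose : |Real.sqrt p - Real.sqrt q| ≤ 1) (hN : N = p * q) :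
    ∃ t : ℕ, 0 < t ∧
      (t : ℝ) = Real.sqrt ((⌈2 * Real.sqrt N⌉ : ℝ) ^ 2 - 4 * N) ∧
      2 ∣ (⌈2 * Real.sqrt N⌉.toNat + t) ∧
      2 ∣ (⌈2 * Real.sqrt N⌉.toNat - t) ∧
      ({p, q} : Finset ℕ) =
        {(⌈2 * Real.sqrt N⌉.toNat + t) / 2, (⌈2 * Real.sqrt N⌉.toNat - t) / 2} := by
  have hne : p ≠ q := hlt.ne'
  have hnsq : ¬ IsSquare N := by
    rintro ⟨k, hk⟩
    have hpk : p ∣ k := by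
      have : p ∣ k * k := by rw [← hk, hN]; exact Dvd.intro q rfl
      exact hp.dvd_of_dvd_pow (n := 2) (by rwa [sq])
    obtain ⟨m, rfl⟩ := hpk
    have h2 : p * q = p * (p * (m * m)) := by rw [← hN, hk]; ring
    have : p ∣ q := ⟨m * m, Nat.eq_of_mul_eq_mul_left hp.pos h2⟩
    exact hne ((hq.eq_one_or_self_of_dvd p this).resolve_left hp.ne_one)
  have hirr : Irrational (Real.sqrt N) := irrational_sqrt_natCast_iff.mpr hnsq
  have hsN : Real.sqrt N = Real.sqrt p * Real.sqrt q := by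
    rw [hN]; push_cast; exact Real.sqrt_mul (by positivity) _
  have hpp := Real.sq_sqrt (by positivity : (0:ℝ) ≤ (p:ℝ))
  have hqq := Real.sq_sqrt (by positivity : (0:ℝ) ≤ (q:ℝ))
  have hsq : ((p:ℝ) + q) - 2 * Real.sqrt N = (Real.sqrt p - Real.sqrt q)^2 := by
    rw [hsN]; nlinarith
  have h1' : ((p:ℝ) + q) - 2 * Real.sqrt N < 1 := by
    have h1 : ((p:ℝ) + q) - 2 * Real.sqrt N ≤ 1 := by
      rw [hsq, ← sq_abs]
      nlinarith [abs_nonneg (Real.sqrt p - Real.sqrt q)]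
    rcases lt_or_eq_of_le h1 with h | h
    · exact h
    · exact absurd ⟨((p:ℚ) + q - 1)/2, by push_cast; linarith⟩ hirr
  have h0 : 0 < ((p:ℝ) + q) - 2 * Real.sqrt N := by
    rw [hsq]
    have hne' : Real.sqrt p ≠ Real.sqrt q := by
      intro h
      refine hne ?_
      have : (p:ℝ) = q := by rw [← hpp, ← hqq, h]
      exact_mod_cast this
    exact pow_two_pos_of_ne_zero (sub_ne_zero.mpr hne')
  have hceil : ⌈2 * Real.sqrt N⌉ = ((p:ℤ) + q) := by
    rw [Int.ceil_eq_iff]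
    constructor
    · push_cast; linarith
    · push_cast; linarith
  have htn : (⌈2 * Real.sqrt N⌉).toNat = p + q := by rw [hceil]; omega
  refine ⟨p - q, by omega, ?_, ?_, ?_, ?_⟩
  · rw [hceil, hN]
    have hqp : (q:ℝ) ≤ p := by exact_mod_cast hlt.le
    push_cast [Nat.cast_sub hlt.le]
    rw [show ((p:ℝ)+q)^2 - 4*((p:ℝ)*q) = ((p:ℝ)-q)^2 from by ring,
      Real.sqrt_sq (by linarith)]
  · rw [htn]; omega
  · rw [htn]; omega
  · rw [htn]
    have e1 : (p + q + (p - q)) / 2 = p := by omega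
    have e2 : (p + q - (p - q)) / 2 = q := by omega
    rw [e1, e2]

theorem stmt_5 (p q N : ℕ) (hp : p.Prime) (hq : q.Prime) (hne : p ≠ q)
    (hclose : |Real.sqrt p - Real.sqrt q| ≤ 1) (hN : N = p * q) :
    ∃ t : ℕ, 0 < t ∧
      (t : ℝ) = Real.sqrt ((⌈2 * Real.sqrt N⌉ : ℝ) ^ 2 - 4 * N) ∧
      2 ∣ (⌈2 * Real.sqrt N⌉.toNat + t) ∧
      2 ∣ (⌈2 * Real.sqrt N⌉.toNat - t) ∧
      ({p, q} : Finset ℕ) =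
        {(⌈2 * Real.sqrt N⌉.toNat + t) / 2, (⌈2 * Real.sqrt N⌉.toNat - t) / 2} := by
  rcases hne.lt_or_gt with h | h
  · have := aux5 q p N hq hp h (by rwa [abs_sub_comm]) (by rw [hN, mul_comm])
    obtain ⟨t, ht⟩ := this
    exact ⟨t, by rwa [Finset.pair_comm p q]⟩
  · exact aux5 p q N hp hq h hclose hN
end

section
/- Let N = p·q with p, q distinct primes, and let d be a positive integer with d < N/2. If N·d = u·v where u, v are positive integers with |√u - √v| ≤ 1 and u, v ≥ 16, then it is not the case that p and q both divide u, and not the case that p and q both divide v. -/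
lemma sqrt_gap (a b : ℕ) (h16 : 16 ≤ b) (hab : 2 * b < a) :
    1 < Real.sqrt a - Real.sqrt b := by
  have hb0 : (0:ℝ) ≤ b := by positivity
  have hsb : (4:ℝ) ≤ Real.sqrt b := by
    rw [show (4:ℝ) = Real.sqrt 16 by
      rw [show (16:ℝ) = 4^2 by norm_num, Real.sqrt_sq (by norm_num)]]
    exact Real.sqrt_le_sqrt (by exact_mod_cast h16)
  have hsq : Real.sqrt b ^ 2 = (b:ℝ) := Real.sq_sqrt hb0
  have key : (Real.sqrt b + 1)^2 < (a:ℝ) := by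
    have h2 : 2 * Real.sqrt b < (b:ℝ) := by
      nlinarith [hsq]
    have : (2 * b + 1 : ℝ) ≤ a := by exact_mod_cast hab
    nlinarith [hsq]
  have := (Real.lt_sqrt (by positivity)).mpr key
  linarith
theorem stmt_7 (p q N d u v : ℕ) (hp : p.Prime) (hq : q.Prime) (hne : p ≠ q)
    (hN : N = p * q) (hd : 0 < d) (hdN : 2 * d < N)
    (hu : 0 < u) (hv : 0 < v) (huv : N * d = u * v)
    (hclose : |Real.sqrt u - Real.sqrt v| ≤ 1)
    (h16u : 16 ≤ u) (h16v : 16 ≤ v) :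
    ¬(p ∣ u ∧ q ∣ u) ∧ ¬(p ∣ v ∧ q ∣ v) := by
  have hcop : Nat.Coprime p q := (Nat.coprime_primes hp hq).mpr hne
  have hN0 : 0 < N := by
    rw [hN]; exact Nat.mul_pos hp.pos hq.pos
  constructor
  · rintro ⟨hpu, hqu⟩
    have hNu : N ∣ u := hN ▸ Nat.Coprime.mul_dvd_of_dvd_of_dvd hcop hpu hqu
    obtain ⟨k, hk⟩ := hNu
    have hk0 : 0 < k := by
      rcases Nat.eq_zero_or_pos k with h | h
      · subst h; simp at hk; omega
      · exact h
    have hdkv : d = k * v := by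
      have : N * d = N * (k * v) := by rw [huv, hk]; ring
      exact Nat.eq_of_mul_eq_mul_left hN0 this
    have hvd : v ≤ d := hdkv ▸ Nat.le_mul_of_pos_left v hk0
    have h2vu : 2 * v < u := by
      have : N ≤ u := hk ▸ Nat.le_mul_of_pos_right N hk0
      omega
    have := sqrt_gap u v h16v h2vu
    have habs := abs_le.mp hclose
    linarith [habs.2]
  · rintro ⟨hpv, hqv⟩
    have hNv : N ∣ v := hN ▸ Nat.Coprime.mul_dvd_of_dvd_of_dvd hcop hpv hqv
    obtain ⟨k, hk⟩ := hNv
    have hk0 : 0 < k := by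
      rcases Nat.eq_zero_or_pos k with h | h
      · subst h; simp at hk; omega
      · exact h
    have hdkv : d = u * k := by
      have : N * d = N * (u * k) := by rw [huv, hk]; ring
      exact Nat.eq_of_mul_eq_mul_left hN0 this
    have hud : u ≤ d := by
      have := Nat.le_mul_of_pos_right u hk0
      omega
    have h2uv : 2 * u < v := by
      have : N ≤ v := hk ▸ Nat.le_mul_of_pos_right N hk0
      omega
    have := sqrt_gap v u h16u h2uv
    have habs := abs_le.mp hclose
    linarith [habs.1]
end
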